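/- Let N ≥ 1 be an integer, α > 0 and N/(N+α) < q < 1. For m > 0 let E^gKS_{q,α}(m) denote the infimum of 𝓔^gKS_{q,α}[ρ] over all measurable ρ : ℝ^N → [0,∞) with ∫_{ℝ^N} ρ^q dx < ∞ and ∫_{ℝ^N} ρ dx = m. Then for every m > 0, E^gKS_{q,α}(m) = m^{(2N−(2N+α)q)/(N−α−Nq)} · E^gKS_{q,α}(1). In particular, if q = 2N/(2N+α), then E^gKS_{q,α}(m) = E^gKS_{q,α}(1) for all m > 0. -/

import Mathlib

open MeasureTheory Set ENNReal

/-- The repulsion term `∫_{ℝ^N} ρ^q dx`, as an extended nonnegative real. -/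
noncomputable def gksRepulsion (N : ℕ) (q : ℝ) (ρ : EuclideanSpace ℝ (Fin N) → ℝ) : ℝ≥0∞ :=
  ∫⁻ x, ENNReal.ofReal (ρ x ^ q)

/-- The attraction term `(1/2)∬ ρ(x)|x-y|^α ρ(y) dx dy`, as an extended nonnegative real. -/
noncomputable def gksAttraction (N : ℕ) (al : ℝ) (ρ : EuclideanSpace ℝ (Fin N) → ℝ) : ℝ≥0∞ :=
  (1 / 2) * ∫⁻ x, ∫⁻ y,
    ENNReal.ofReal (ρ x) * ENNReal.ofReal (‖x - y‖ ^ al) * ENNReal.ofReal (ρ y)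

/-- The generalized Keller--Segel energy
`𝓔^gKS_{q,α}[ρ] = -∫ ρ^q + (1/2)∬ ρ(x)|x-y|^α ρ(y)`, with values in the extended reals. -/
noncomputable def gksEnergy (N : ℕ) (q al : ℝ) (ρ : EuclideanSpace ℝ (Fin N) → ℝ) : EReal :=
  -(gksRepulsion N q ρ : EReal) + (gksAttraction N al ρ : EReal)

/-- Admissible densities of mass `m`: measurable and nonnegative, with `∫ ρ^q < ∞`
and `∫ ρ = m`. -/
def GksAdmissible (N : ℕ) (q m : ℝ) (ρ : EuclideanSpace ℝ (Fin N) → ℝ) : Prop :=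
  Measurable ρ ∧ (∀ x, 0 ≤ ρ x) ∧ gksRepulsion N q ρ ≠ ⊤ ∧
    ∫⁻ x, ENNReal.ofReal (ρ x) = ENNReal.ofReal m

/-- The generalized Keller--Segel infimum `E^gKS_{q,α}(m)` over densities of mass `m`. -/
noncomputable def gksInf (N : ℕ) (q al m : ℝ) : EReal :=
  sInf { e : EReal | ∃ ρ : EuclideanSpace ℝ (Fin N) → ℝ,
    GksAdmissible N q m ρ ∧ e = gksEnergy N q al ρ }

/-! ### Auxiliary lemmas -/

lemma gks_lint_smul {N : ℕ} (f : EuclideanSpace ℝ (Fin N) → ℝ≥0∞)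
    (hf : Measurable f) {l : ℝ} (hl : 0 < l) :
    ∫⁻ x, f (l • x) = ENNReal.ofReal ((l ^ N)⁻¹) * ∫⁻ x, f x := by
  have h1 : (∫⁻ x, f (l • x)) = ∫⁻ y, f y ∂(Measure.map (l • ·) volume) := by
    rw [lintegral_map hf (measurable_const_smul l)]
  rw [h1, Measure.map_addHaar_smul volume hl.ne', lintegral_smul_measure]
  congr 2
  rw [finrank_euclideanSpace_fin, abs_of_nonneg (by positivity)]

lemma gks_rep_scale {N : ℕ} {q : ℝ} (ρ : EuclideanSpace ℝ (Fin N) → ℝ) (hρ : Measurable ρ)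
    (hρ0 : ∀ x, 0 ≤ ρ x) {μ l : ℝ} (hμ : 0 < μ) (hl : 0 < l) :
    gksRepulsion N q (fun x => μ * ρ (l • x)) =
      ENNReal.ofReal (μ ^ q * (l ^ N)⁻¹) * gksRepulsion N q ρ := by
  unfold gksRepulsion
  have h1 : ∀ x : EuclideanSpace ℝ (Fin N), ENNReal.ofReal ((μ * ρ (l • x)) ^ q)
      = ENNReal.ofReal (μ ^ q) * ENNReal.ofReal (ρ (l • x) ^ q) := fun x => by
    rw [Real.mul_rpow hμ.le (hρ0 _), ENNReal.ofReal_mul (by positivity)]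
  simp_rw [h1]
  have hm : Measurable fun x : EuclideanSpace ℝ (Fin N) => ENNReal.ofReal (ρ (l • x) ^ q) :=
    ((hρ.comp (measurable_const_smul l)).pow measurable_const).ennreal_ofReal
  rw [lintegral_const_mul _ hm,
    gks_lint_smul _ ((hρ.pow measurable_const).ennreal_ofReal) hl, ← mul_assoc,
    ← ENNReal.ofReal_mul (by positivity)]

lemma gks_attr_scale {N : ℕ} {al : ℝ} (ρ : EuclideanSpace ℝ (Fin N) → ℝ)
    (hρ : Measurable ρ) {μ l : ℝ} (hμ : 0 < μ) (hl : 0 < l) :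
    gksAttraction N al (fun x => μ * ρ (l • x)) =
      ENNReal.ofReal (μ ^ 2 * ((l ^ N)⁻¹) ^ 2 * (l ^ al)⁻¹) * gksAttraction N al ρ := by
  set h : EuclideanSpace ℝ (Fin N) × EuclideanSpace ℝ (Fin N) → ℝ≥0∞ := fun p =>
    ENNReal.ofReal (ρ p.1) * ENNReal.ofReal (‖p.1 - p.2‖ ^ al) * ENNReal.ofReal (ρ p.2) with hh
  have hhm : Measurable h := by
    rw [hh]
    apply Measurable.fun_mul
    apply Measurable.fun_mul
    · exact (hρ.comp measurable_fst).ennreal_ofReal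
    · exact (((measurable_fst.sub measurable_snd).norm).pow measurable_const).ennreal_ofReal
    · exact (hρ.comp measurable_snd).ennreal_ofReal
  have key : ∀ x y : EuclideanSpace ℝ (Fin N),
      ENNReal.ofReal (μ * ρ (l • x)) * ENNReal.ofReal (‖x - y‖ ^ al) *
        ENNReal.ofReal (μ * ρ (l • y))
      = ENNReal.ofReal (μ ^ 2 * (l ^ al)⁻¹) * h (l • x, l • y) := by
    intro x y
    have hns : ‖l • x - l • y‖ = l * ‖x - y‖ := by
      rw [← smul_sub, norm_smul, Real.norm_eq_abs, abs_of_pos hl]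
    have hnorm : ‖x - y‖ ^ al = (l ^ al)⁻¹ * ‖l • x - l • y‖ ^ al := by
      rw [hns, Real.mul_rpow hl.le (norm_nonneg _),
        inv_mul_cancel_left₀ (ne_of_gt (Real.rpow_pos_of_pos hl al))]
    rw [ENNReal.ofReal_mul hμ.le, ENNReal.ofReal_mul hμ.le, hnorm,
      ENNReal.ofReal_mul (by positivity),
      show μ ^ 2 * (l ^ al)⁻¹ = μ * (μ * (l ^ al)⁻¹) by ring,
      ENNReal.ofReal_mul hμ.le, ENNReal.ofReal_mul hμ.le]
    simp only [hh]
    ring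
  unfold gksAttraction
  simp_rw [key]
  have H : Measurable fun u : EuclideanSpace ℝ (Fin N) => ∫⁻ v, h (u, v) :=
    hhm.lintegral_prod_right'
  have inner : ∀ x : EuclideanSpace ℝ (Fin N),
      (∫⁻ y, ENNReal.ofReal (μ ^ 2 * (l ^ al)⁻¹) * h (l • x, l • y))
      = ENNReal.ofReal (μ ^ 2 * (l ^ al)⁻¹) * (ENNReal.ofReal ((l ^ N)⁻¹) *
          ∫⁻ v, h (l • x, v)) := by
    intro x
    have hmy : Measurable fun y : EuclideanSpace ℝ (Fin N) => h (l • x, l • y) :=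
      hhm.comp (measurable_const.prodMk (measurable_const_smul l))
    have hmy' : Measurable fun v : EuclideanSpace ℝ (Fin N) => h (l • x, v) :=
      hhm.comp (measurable_const.prodMk measurable_id)
    rw [lintegral_const_mul _ hmy, gks_lint_smul (fun v => h (l • x, v)) hmy' hl]
  rw [lintegral_congr inner]
  have hms : Measurable fun x : EuclideanSpace ℝ (Fin N) => ∫⁻ v, h (l • x, v) :=
    H.comp (measurable_const_smul l)
  rw [lintegral_const_mul _ (hms.const_mul _), lintegral_const_mul _ hms,
    gks_lint_smul (fun u => ∫⁻ v, h (u, v)) H hl]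
  rw [ENNReal.ofReal_mul (by positivity), ENNReal.ofReal_mul (by positivity),
    show ((l : ℝ) ^ N)⁻¹ ^ 2 = (l ^ N)⁻¹ * (l ^ N)⁻¹ by ring,
    ENNReal.ofReal_mul (by positivity), ENNReal.ofReal_mul (by positivity)]
  ring

lemma gks_scale_adm {N : ℕ} {q al μ l c m0 m' : ℝ} (hμ : 0 < μ) (hl : 0 < l) (hc : 0 < c)
    (h1 : μ ^ q * ((l : ℝ) ^ N)⁻¹ = c)
    (h2 : μ ^ 2 * (((l : ℝ) ^ N)⁻¹) ^ 2 * (l ^ al)⁻¹ = c)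
    (h3 : μ * ((l : ℝ) ^ N)⁻¹ * m0 = m') (hm0 : 0 ≤ m0)
    {ρ : EuclideanSpace ℝ (Fin N) → ℝ} (hρ : GksAdmissible N q m0 ρ) :
    GksAdmissible N q m' (fun x => μ * ρ (l • x)) ∧
      gksEnergy N q al (fun x => μ * ρ (l • x)) = (c : EReal) * gksEnergy N q al ρ := by
  obtain ⟨hmeas, hnn, hrep, hmass⟩ := hρ
  have hrepσ : gksRepulsion N q (fun x => μ * ρ (l • x)) =
      ENNReal.ofReal c * gksRepulsion N q ρ := by
    rw [gks_rep_scale ρ hmeas hnn hμ hl, h1]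
  have hattrσ : gksAttraction N al (fun x => μ * ρ (l • x)) =
      ENNReal.ofReal c * gksAttraction N al ρ := by
    rw [gks_attr_scale ρ hmeas hμ hl, h2]
  constructor
  · refine ⟨(hmeas.comp (measurable_const_smul l)).const_mul μ,
      fun x => mul_nonneg hμ.le (hnn _), ?_, ?_⟩
    · rw [hrepσ]
      exact ENNReal.mul_ne_top ENNReal.ofReal_ne_top hrep
    · have e1 : ∀ x : EuclideanSpace ℝ (Fin N), ENNReal.ofReal (μ * ρ (l • x))
          = ENNReal.ofReal μ * ENNReal.ofReal (ρ (l • x)) := fun x =>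
        ENNReal.ofReal_mul hμ.le
      simp_rw [e1]
      have hm2 : Measurable fun x : EuclideanSpace ℝ (Fin N) => ENNReal.ofReal (ρ (l • x)) :=
        (hmeas.comp (measurable_const_smul l)).ennreal_ofReal
      rw [lintegral_const_mul _ hm2,
        gks_lint_smul (fun x => ENNReal.ofReal (ρ x)) hmeas.ennreal_ofReal hl, hmass,
        ← mul_assoc, ← ENNReal.ofReal_mul hμ.le,
        ← ENNReal.ofReal_mul (by positivity), h3]
  · unfold gksEnergy
    rw [hrepσ, hattrσ]
    set A := gksRepulsion N q ρ with hA
    set B := gksAttraction N al ρ with hB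
    have cA : ((ENNReal.ofReal c * A : ℝ≥0∞) : EReal) = (c : EReal) * (A : EReal) := by
      rw [EReal.coe_ennreal_mul, EReal.coe_ennreal_ofReal, max_eq_left hc.le]
    have cB : ((ENNReal.ofReal c * B : ℝ≥0∞) : EReal) = (c : EReal) * (B : EReal) := by
      rw [EReal.coe_ennreal_mul, EReal.coe_ennreal_ofReal, max_eq_left hc.le]
    rw [cA, cB]
    have hAr : (A : EReal) = ((A.toReal : ℝ) : EReal) := by
      conv_lhs => rw [← ENNReal.ofReal_toReal hrep]
      rw [EReal.coe_ennreal_ofReal, max_eq_left ENNReal.toReal_nonneg]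
    rw [hAr]
    by_cases hBtop : B = ⊤
    · rw [hBtop, EReal.coe_ennreal_top, EReal.coe_mul_top_of_pos hc,
        show -((c : EReal) * ((A.toReal : ℝ) : EReal)) = (((-(c * A.toReal) : ℝ)) : EReal) by
          norm_cast,
        show -(((A.toReal : ℝ)) : EReal) = ((((-A.toReal) : ℝ)) : EReal) by norm_cast,
        EReal.coe_add_top, EReal.coe_add_top, EReal.coe_mul_top_of_pos hc]
    · have hBr : (B : EReal) = ((B.toReal : ℝ) : EReal) := by
        conv_lhs => rw [← ENNReal.ofReal_toReal hBtop]
        rw [EReal.coe_ennreal_ofReal, max_eq_left ENNReal.toReal_nonneg]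
      rw [hBr, ← EReal.coe_mul, ← EReal.coe_mul, ← EReal.coe_neg, ← EReal.coe_neg,
        ← EReal.coe_add, ← EReal.coe_add, ← EReal.coe_mul, EReal.coe_eq_coe_iff]
      ring

/-- Multiplication by a positive real constant, as an order isomorphism of `EReal`. -/
noncomputable def gksMulIso (c : ℝ) (hc : 0 < c) : EReal ≃o EReal where
  toFun x := (c : EReal) * x
  invFun x := ((c⁻¹ : ℝ) : EReal) * x
  left_inv x := by
    show ((c⁻¹ : ℝ) : EReal) * ((c : EReal) * x) = x
    rw [← mul_assoc, ← EReal.coe_mul, inv_mul_cancel₀ hc.ne', EReal.coe_one, one_mul]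
  right_inv x := by
    show ((c : ℝ) : EReal) * (((c⁻¹ : ℝ) : EReal) * x) = x
    rw [← mul_assoc, ← EReal.coe_mul, mul_inv_cancel₀ hc.ne', EReal.coe_one, one_mul]
  map_rel_iff' := by
    intro x y
    show (c : EReal) * x ≤ (c : EReal) * y ↔ x ≤ y
    constructor
    · intro h
      have h2 := mul_le_mul_of_nonneg_left h
        (by exact_mod_cast (inv_pos.2 hc).le : (0 : EReal) ≤ ((c⁻¹ : ℝ) : EReal))
      rwa [← mul_assoc, ← mul_assoc, ← EReal.coe_mul, inv_mul_cancel₀ hc.ne',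
        EReal.coe_one, one_mul, one_mul] at h2
    · intro h
      exact mul_le_mul_of_nonneg_left h (by exact_mod_cast hc.le)

lemma gks_sInf_mul {c : ℝ} (hc : 0 < c) (S : Set EReal) :
    sInf ((fun x => (c : EReal) * x) '' S) = (c : EReal) * sInf S :=
  calc sInf ((fun x => (c : EReal) * x) '' S) = ⨅ a ∈ S, (c : EReal) * a := sInf_image
    _ = (gksMulIso c hc) (sInf S) := ((gksMulIso c hc).map_sInf S).symm
    _ = (c : EReal) * sInf S := rfl

/-! ### The main theorem -/

/-- Scaling in the mass: for `N/(N+α) < q < 1` and every `m > 0`,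
`E^gKS_{q,α}(m) = m^{(2N-(2N+α)q)/(N-α-Nq)} E^gKS_{q,α}(1)`; in particular for
`q = 2N/(2N+α)` the infimum is independent of the mass. -/
theorem gks_inf_mass_scaling (N : ℕ) (hN : 1 ≤ N) (al : ℝ) (hal : 0 < al)
    (q : ℝ) (hq0 : (N : ℝ) / (N + al) < q) (hq1 : q < 1) (m : ℝ) (hm : 0 < m) :
    gksInf N q al m =
      ((m ^ ((2 * (N : ℝ) - (2 * N + al) * q) / ((N : ℝ) - al - N * q)) : ℝ) : EReal) *
        gksInf N q al 1 ∧
    (q = 2 * (N : ℝ) / (2 * N + al) → gksInf N q al m = gksInf N q al 1) := by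
  have hNpos : (0 : ℝ) < N := by exact_mod_cast hN
  have hq0' : (N : ℝ) < q * (N + al) := by
    have := (div_lt_iff₀ (by positivity)).1 hq0
    linarith
  have hqpos : 0 < q := by nlinarith
  have hd : 0 < (N : ℝ) * q - N + al := by nlinarith
  have hdd : (N : ℝ) * q - N + al ≠ 0 := hd.ne'
  have hdd2 : (N : ℝ) - al - N * q ≠ 0 := by intro h; apply hdd; linarith
  set e₀ : ℝ := (2 - q) / ((N : ℝ) * q - N + al) with he₀
  -- the scaling parameters, as functions of the mass ratio
  have main : ∀ t : ℝ, 0 < t →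
      (t ^ (1 + N * e₀)) ^ q * (((t ^ e₀ : ℝ)) ^ N)⁻¹ = t ^ (2 - al * e₀) ∧
      (t ^ (1 + N * e₀)) ^ 2 * ((((t ^ e₀ : ℝ)) ^ N)⁻¹) ^ 2 * ((t ^ e₀) ^ al)⁻¹
        = t ^ (2 - al * e₀) ∧
      t ^ (1 + N * e₀) * (((t ^ e₀ : ℝ)) ^ N)⁻¹ = t := by
    intro t ht
    have hN' : ((t ^ e₀ : ℝ)) ^ N = t ^ (e₀ * N) := by
      rw [← Real.rpow_natCast (t ^ e₀) N, ← Real.rpow_mul ht.le]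
    refine ⟨?_, ?_, ?_⟩
    · rw [hN', ← Real.rpow_neg ht.le, ← Real.rpow_mul ht.le, ← Real.rpow_add ht]
      congr 1
      rw [he₀]
      linear_combination div_mul_cancel₀ (2 - q) hdd
    · rw [hN', ← Real.rpow_neg ht.le,
        ← Real.rpow_natCast (t ^ (1 + (N : ℝ) * e₀)) 2,
        ← Real.rpow_natCast (t ^ (-(e₀ * (N : ℝ)))) 2,
        ← Real.rpow_mul ht.le, ← Real.rpow_mul ht.le, ← Real.rpow_mul ht.le,
        ← Real.rpow_neg ht.le, ← Real.rpow_add ht, ← Real.rpow_add ht]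
      congr 1
      rw [he₀]
      push_cast
      field_simp
      ring
    · rw [hN', ← Real.rpow_neg ht.le, ← Real.rpow_add ht]
      rw [show 1 + (N : ℝ) * e₀ + -(e₀ * N) = 1 by ring, Real.rpow_one]
  set c : ℝ := m ^ (2 - al * e₀) with hcdef
  have hc : 0 < c := Real.rpow_pos_of_pos hm _
  -- the energy sets
  set S1 : Set EReal := { e : EReal | ∃ ρ : EuclideanSpace ℝ (Fin N) → ℝ,
    GksAdmissible N q 1 ρ ∧ e = gksEnergy N q al ρ } with hS1
  set Sm : Set EReal := { e : EReal | ∃ ρ : EuclideanSpace ℝ (Fin N) → ℝ,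
    GksAdmissible N q m ρ ∧ e = gksEnergy N q al ρ } with hSm
  have hset : Sm = (fun x => (c : EReal) * x) '' S1 := by
    apply Set.Subset.antisymm
    · rintro e ⟨ρ, hadm, rfl⟩
      -- scale down with mass ratio m⁻¹
      obtain ⟨g1, g2, g3⟩ := main m⁻¹ (inv_pos.2 hm)
      have hc' : (m⁻¹ : ℝ) ^ (2 - al * e₀) = c⁻¹ := by
        rw [Real.inv_rpow hm.le]
      have hμ' : (0:ℝ) < m⁻¹ ^ (1 + N * e₀) := Real.rpow_pos_of_pos (inv_pos.2 hm) _
      have hl' : (0:ℝ) < m⁻¹ ^ e₀ := Real.rpow_pos_of_pos (inv_pos.2 hm) _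
      have h3' : m⁻¹ ^ (1 + N * e₀) * (((m⁻¹ ^ e₀ : ℝ)) ^ N)⁻¹ * m = 1 := by
        rw [g3, inv_mul_cancel₀ hm.ne']
      obtain ⟨hadmσ, henσ⟩ := gks_scale_adm hμ' hl'
        (inv_pos.2 hc) (by rw [hc'] at g1; exact g1) (by rw [hc'] at g2; exact g2)
        h3' hm.le hadm
      refine ⟨gksEnergy N q al (fun x => m⁻¹ ^ (1 + N * e₀) * ρ (m⁻¹ ^ e₀ • x)),
        ⟨_, hadmσ, rfl⟩, ?_⟩
      show (c : EReal) * gksEnergy N q al (fun x => m⁻¹ ^ (1 + N * e₀) * ρ (m⁻¹ ^ e₀ • x))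
        = gksEnergy N q al ρ
      rw [henσ, ← mul_assoc, ← EReal.coe_mul, mul_inv_cancel₀ hc.ne', EReal.coe_one, one_mul]
    · rintro e ⟨e', ⟨ρ, hadm, rfl⟩, rfl⟩
      obtain ⟨g1, g2, g3⟩ := main m hm
      have hμ' : (0:ℝ) < m ^ (1 + N * e₀) := Real.rpow_pos_of_pos hm _
      have hl' : (0:ℝ) < m ^ e₀ := Real.rpow_pos_of_pos hm _
      have h3' : m ^ (1 + N * e₀) * (((m ^ e₀ : ℝ)) ^ N)⁻¹ * 1 = m := by
        rw [mul_one, g3]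
      obtain ⟨hadmσ, henσ⟩ := gks_scale_adm hμ' hl' hc g1 g2 h3' zero_le_one hadm
      exact ⟨_, hadmσ, henσ.symm⟩
  have hmain : gksInf N q al m = (c : EReal) * gksInf N q al 1 := by
    rw [gksInf, gksInf, ← hS1, ← hSm, hset, gks_sInf_mul hc]
  have hcform : c = m ^ ((2 * (N : ℝ) - (2 * N + al) * q) / ((N : ℝ) - al - N * q)) := by
    rw [hcdef]
    congr 1
    rw [he₀]
    rw [eq_div_iff hdd2]
    linear_combination al * div_mul_cancel₀ (2 - q) hdd
  constructor
  · rw [hmain, hcform]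
  · intro hq
    rw [hmain]
    have h2N : (0:ℝ) < 2 * N + al := by positivity
    have hq2 : q * (2 * (N : ℝ) + al) = 2 * N := by
      rw [hq]; field_simp
    have hnum : 2 - al * e₀ = 0 := by
      rw [he₀]
      exact (mul_eq_zero.1 (by linear_combination (-al) * div_mul_cancel₀ (2 - q) hdd + hq2 :
        (2 - al * ((2 - q) / ((N : ℝ) * q - N + al))) * ((N : ℝ) * q - N + al) = 0)).resolve_right hdd
    rw [hcdef, hnum, Real.rpow_zero, EReal.coe_one, one_mul]
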